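/- In the unitary product-state setup, for every natural number α ≥ 1, the complex-valued function of the real variable t given by t ↦ trace((ρ_A(t))^α) is differentiable at t = 0 with derivative 0. -/

import Mathlib

open Matrix
open scoped Kronecker Matrix

/-- Partial trace over the second tensor factor. -/
noncomputable def ptraceB {ιA ιB : Type*} [Fintype ιA] [Fintype ιB]
    (ρ : Matrix (ιA × ιB) (ιA × ιB) ℂ) : Matrix ιA ιA ℂ :=
  Matrix.of fun a a' => ∑ b, ρ (a, b) (a', b)

lemma ptraceB_add {ιA ιB : Type*} [Fintype ιA] [Fintype ιB]
    (X Y : Matrix (ιA × ιB) (ιA × ιB) ℂ) :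
    ptraceB (X + Y) = ptraceB X + ptraceB Y := by
  ext a a'; simp [ptraceB, Finset.sum_add_distrib]

lemma ptraceB_smul {ιA ιB : Type*} [Fintype ιA] [Fintype ιB]
    (c : ℂ) (X : Matrix (ιA × ιB) (ιA × ιB) ℂ) :
    ptraceB (c • X) = c • ptraceB X := by
  ext a a'; simp [ptraceB, Finset.mul_sum]

lemma trace_mul_ptraceB {ιA ιB : Type*} [Fintype ιA] [Fintype ιB] [DecidableEq ιB]
    (M : Matrix ιA ιA ℂ) (X : Matrix (ιA × ιB) (ιA × ιB) ℂ) :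
    (M * ptraceB X).trace = ((M ⊗ₖ (1 : Matrix ιB ιB ℂ)) * X).trace := by
  simp only [Matrix.trace, Matrix.diag, Matrix.mul_apply, ptraceB, Matrix.of_apply,
    Fintype.sum_prod_type, kroneckerMap_apply, Matrix.one_apply, mul_ite, mul_one, mul_zero,
    ite_mul, zero_mul, Finset.sum_ite_eq, Finset.mem_univ, if_true, Finset.mul_sum]
  refine Finset.sum_congr rfl fun a _ => ?_
  exact Finset.sum_comm

lemma vecMulVec_idem {ι : Type*} [Fintype ι] (ψ : ι → ℂ) (hψ : star ψ ⬝ᵥ ψ = 1) :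
    vecMulVec ψ (star ψ) * vecMulVec ψ (star ψ) = vecMulVec ψ (star ψ) := by
  ext a a'
  simp only [Matrix.mul_apply, vecMulVec_apply, Pi.star_apply]
  have h1 : ∀ c ∈ Finset.univ, (ψ a * star (ψ c)) * (ψ c * star (ψ a')) =
      (star (ψ c) * ψ c) * (ψ a * star (ψ a')) := fun c _ => by ring
  rw [Finset.sum_congr rfl h1, ← Finset.sum_mul]
  have h : ∑ c : ι, star (ψ c) * ψ c = 1 := by simpa [dotProduct] using hψ
  rw [h, one_mul]

lemma ptraceB_kron {ιA ιB : Type*} [Fintype ιA] [Fintype ιB]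
    (P : Matrix ιA ιA ℂ) (Q : Matrix ιB ιB ℂ) (h : Q.trace = 1) :
    ptraceB (P ⊗ₖ Q) = P := by
  ext a a'
  simp only [ptraceB, Matrix.of_apply, kroneckerMap_apply, ← Finset.mul_sum]
  have : ∑ b : ιB, Q b b = 1 := h
  rw [this, mul_one]

lemma aux_pow_hasDerivAt {𝔸 : Type*} [NormedRing 𝔸] [NormedAlgebra ℂ 𝔸]
    {f : ℂ → 𝔸} {f' : 𝔸} {x : ℂ} (hf : HasDerivAt f f' x) (n : ℕ) :
    HasDerivAt (fun z => f z ^ n)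
      (∑ k ∈ Finset.range n, f x ^ k * f' * f x ^ (n - 1 - k)) x := by
  induction n with
  | zero => simpa using hasDerivAt_const x (1 : 𝔸)
  | succ n ih =>
    have h := ih.mul hf
    simp_rw [Pi.mul_def, ← pow_succ] at h
    convert h using 1
    rw [Finset.sum_range_succ, Finset.sum_mul]
    congr 1
    · refine Finset.sum_congr rfl fun k hk => ?_
      rw [Finset.mem_range] at hk
      have h2 : n + 1 - 1 - k = (n - 1 - k) + 1 := by omega
      rw [h2, pow_succ, ← mul_assoc]
    · have h2 : n + 1 - 1 - n = 0 := by omega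
      rw [h2, pow_zero, mul_one]

/-- **First-order stationarity of Rényi traces at `t = 0` in the unitary product-state setup.**
Starting from a pure product density matrix `ρ₀ = P_A ⊗ P_B` evolving unitarily under a
Hermitian Hamiltonian `H = Σₙ Aₙ ⊗ Bₙ`, for every natural `α ≥ 1` the function
`t ↦ trace ((ρ_A t) ^ α)` is differentiable at `t = 0` with derivative `0`. -/
theorem renyi_trace_deriv_zero {ιA ιB : Type*}
    [Fintype ιA] [DecidableEq ιA] [Nonempty ιA]
    [Fintype ιB] [DecidableEq ιB] [Nonempty ιB]
    (ψA : ιA → ℂ) (ψB : ιB → ℂ)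
    (hψA : star ψA ⬝ᵥ ψA = 1) (hψB : star ψB ⬝ᵥ ψB = 1)
    {N : Type*} [Fintype N]
    (A : N → Matrix ιA ιA ℂ) (B : N → Matrix ιB ιB ℂ)
    (H : Matrix (ιA × ιB) (ιA × ιB) ℂ)
    (hH : H = ∑ n, (A n) ⊗ₖ (B n))
    (hHerm : H.IsHermitian)
    (ρ₀ : Matrix (ιA × ιB) (ιA × ιB) ℂ)
    (hρ₀ : ρ₀ = (Matrix.vecMulVec ψA (star ψA)) ⊗ₖ (Matrix.vecMulVec ψB (star ψB)))
    (ρ : ℝ → Matrix (ιA × ιB) (ιA × ιB) ℂ)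
    (hρ : ∀ t : ℝ, ρ t =
      NormedSpace.exp ((-(t : ℂ) * Complex.I) • H) * ρ₀ *
        NormedSpace.exp (((t : ℂ) * Complex.I) • H))
    (α : ℕ) (hα : 1 ≤ α) :
    HasDerivAt (fun t : ℝ => (ptraceB (ρ t) ^ α).trace) 0 0 := by
  classical
  letI : SeminormedRing (Matrix (ιA × ιB) (ιA × ιB) ℂ) := Matrix.linftyOpSemiNormedRing
  letI : NormedRing (Matrix (ιA × ιB) (ιA × ιB) ℂ) := Matrix.linftyOpNormedRing
  letI : NormedAlgebra ℂ (Matrix (ιA × ιB) (ιA × ιB) ℂ) := Matrix.linftyOpNormedAlgebra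
  letI : SeminormedRing (Matrix ιA ιA ℂ) := Matrix.linftyOpSemiNormedRing
  letI : NormedRing (Matrix ιA ιA ℂ) := Matrix.linftyOpNormedRing
  letI : NormedAlgebra ℂ (Matrix ιA ιA ℂ) := Matrix.linftyOpNormedAlgebra
  set PA : Matrix ιA ιA ℂ := vecMulVec ψA (star ψA) with hPAdef
  set PB : Matrix ιB ιB ℂ := vecMulVec ψB (star ψB) with hPBdef
  set Mneg : Matrix (ιA × ιB) (ιA × ιB) ℂ := (-Complex.I) • H with hMneg
  set Mpos : Matrix (ιA × ιB) (ιA × ιB) ℂ := Complex.I • H with hMpos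
  -- ptraceB as a linear map
  let Lp : Matrix (ιA × ιB) (ιA × ιB) ℂ →ₗ[ℂ] Matrix ιA ιA ℂ :=
    { toFun := ptraceB
      map_add' := ptraceB_add
      map_smul' := ptraceB_smul }
  -- derivative of the two exponentials at 0
  have h₁ : HasDerivAt (fun z : ℂ => NormedSpace.exp (z • Mneg)) Mneg 0 := by
    have h := hasDerivAt_exp_smul_const (𝕂 := ℂ) Mneg 0; simp at h; exact h
  have h₂ : HasDerivAt (fun z : ℂ => NormedSpace.exp (z • Mpos)) Mpos 0 := by
    have h := hasDerivAt_exp_smul_const (𝕂 := ℂ) Mpos 0; simp at h; exact h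
  set D : Matrix (ιA × ιB) (ιA × ιB) ℂ := Mneg * ρ₀ + ρ₀ * Mpos with hDdef
  have hE : HasDerivAt
      (fun z : ℂ => NormedSpace.exp (z • Mneg) * ρ₀ * NormedSpace.exp (z • Mpos)) D 0 := by
    have h := (h₁.mul_const ρ₀).mul h₂
    simp [Pi.mul_def] at h; exact h
  -- partial trace of the evolution
  have hptr : HasDerivAt
      (fun z : ℂ => ptraceB (NormedSpace.exp (z • Mneg) * ρ₀ * NormedSpace.exp (z • Mpos)))
      (ptraceB D) 0 := by
    have := (LinearMap.toContinuousLinearMap Lp).hasFDerivAt.comp_hasDerivAt 0 hE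
    exact this
  -- power
  have hpow := aux_pow_hasDerivAt hptr α
  have hP0 : ptraceB (NormedSpace.exp ((0:ℂ) • Mneg) * ρ₀ * NormedSpace.exp ((0:ℂ) • Mpos))
      = PA := by
    rw [zero_smul, zero_smul, NormedSpace.exp_zero, one_mul, mul_one, hρ₀]
    apply ptraceB_kron
    rw [Matrix.trace]
    have : ∀ b, PB.diag b = star (ψB b) * ψB b := by
      intro b; simp [hPBdef, vecMulVec_apply, mul_comm]
    rw [Finset.sum_congr rfl fun b _ => this b]
    simpa [dotProduct] using hψB
  rw [hP0] at hpow
  -- trace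
  have htr := (LinearMap.toContinuousLinearMap
      (Matrix.traceLinearMap ιA ℂ ℂ)).hasFDerivAt.comp_hasDerivAt 0 hpow
  simp only [Function.comp_def, LinearMap.coe_toContinuousLinearMap',
    Matrix.traceLinearMap_apply] at htr
  -- absorption lemmas
  have hPAidem : PA * PA = PA := vecMulVec_idem ψA hψA
  have hPApow : ∀ j : ℕ, PA ^ (j + 1) = PA := by
    intro j
    induction j with
    | zero => rw [pow_one]
    | succ j ih => rw [pow_succ, ih, hPAidem]
  have habs_l : ∀ j : ℕ, ((PA ^ j) ⊗ₖ (1 : Matrix ιB ιB ℂ)) * ρ₀ = ρ₀ := by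
    intro j
    cases j with
    | zero => simp [hρ₀]
    | succ j =>
      rw [hPApow j, hρ₀, ← Matrix.mul_kronecker_mul, hPAidem, one_mul]
  have habs_r : ∀ j : ℕ, ρ₀ * ((PA ^ j) ⊗ₖ (1 : Matrix ιB ιB ℂ)) = ρ₀ := by
    intro j
    cases j with
    | zero => simp [hρ₀]
    | succ j =>
      rw [hPApow j, hρ₀, ← Matrix.mul_kronecker_mul, hPAidem, mul_one]
  -- the derivative value is zero
  have hzero :
      (∑ k ∈ Finset.range α, PA ^ k * ptraceB D * PA ^ (α - 1 - k)).trace = 0 := by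
    simp only [Matrix.trace_sum]
    refine Finset.sum_eq_zero fun k hk => ?_
    rw [Matrix.trace_mul_comm (PA ^ k * ptraceB D) (PA ^ (α - 1 - k)), ← mul_assoc, ← pow_add]
    set j : ℕ := α - 1 - k + k with hj
    have hG : ptraceB D = (-Complex.I) • ptraceB (H * ρ₀) + Complex.I • ptraceB (ρ₀ * H) := by
      rw [hDdef, ptraceB_add, hMneg, hMpos, smul_mul_assoc, mul_smul_comm, ptraceB_smul, ptraceB_smul]
    rw [hG, mul_add, Matrix.trace_add, mul_smul_comm, mul_smul_comm, Matrix.trace_smul,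
      Matrix.trace_smul, trace_mul_ptraceB, trace_mul_ptraceB]
    have e1 : (((PA ^ j) ⊗ₖ (1 : Matrix ιB ιB ℂ)) * (H * ρ₀)).trace = (H * ρ₀).trace := by
      rw [Matrix.trace_mul_comm ((PA ^ j) ⊗ₖ (1 : Matrix ιB ιB ℂ)) (H * ρ₀), mul_assoc, habs_r]
    have e2 : (((PA ^ j) ⊗ₖ (1 : Matrix ιB ιB ℂ)) * (ρ₀ * H)).trace = (H * ρ₀).trace := by
      rw [← mul_assoc, habs_l, Matrix.trace_mul_comm]
    rw [e1, e2]
    simp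
  replace htr := htr.congr_deriv hzero
  -- transfer to the real line
  have hreal := HasDerivAt.comp_ofReal htr
  have hfun : (fun t : ℝ => (ptraceB (ρ t) ^ α).trace) =
      fun t : ℝ =>
        ((ptraceB (NormedSpace.exp ((t:ℂ) • Mneg) * ρ₀ * NormedSpace.exp ((t:ℂ) • Mpos))) ^ α).trace := by
    funext t
    rw [hρ t]
    have eneg : (-(t : ℂ) * Complex.I) • H = (t : ℂ) • Mneg := by
      rw [hMneg, smul_smul]; ring_nf
    have epos : ((t : ℂ) * Complex.I) • H = (t : ℂ) • Mpos := by
      rw [hMpos, smul_smul]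
    rw [eneg, epos]
  rw [hfun]
  exact hreal
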